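/- Let ε > 0 and let u, v, a, χ ∈ ℝ satisfy 0 ≤ χ ≤ 1, χ = 1 whenever u > v, and χ = 0 whenever u < v. Then (H_ε(a − v) − χ)·(u − a) ≤ ε. -/
import Mathlib


/-- The regularized Heaviside function `H_ε`. -/
noncomputable def Heps (ε t : ℝ) : ℝ := max 0 (min (t / ε) 1)

theorem stmt2 (ε u v a χ : ℝ) (hε : 0 < ε)
    (hχ0 : 0 ≤ χ) (hχ1 : χ ≤ 1)
    (hgt : u > v → χ = 1) (hlt : u < v → χ = 0) :
    (Heps ε (a - v) - χ) * (u - a) ≤ ε := by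
  set H := Heps ε (a - v) with hHdef
  have hH0 : 0 ≤ H := le_max_left _ _
  have hH1 : H ≤ 1 := max_le (by linarith) (min_le_right _ _)
  have hzero : a - v ≤ 0 → H = 0 := by
    intro h
    have : (a - v) / ε ≤ 0 := div_nonpos_of_nonpos_of_nonneg h hε.le
    simp [hHdef, Heps, max_eq_left, min_le_of_left_le this, le_trans (min_le_left _ _) this]
  have hub : 0 ≤ a - v → H * ε ≤ a - v := by
    intro h
    have h1 : H ≤ (a - v) / ε := max_le (div_nonneg h hε.le) (min_le_left _ _)
    calc H * ε ≤ (a - v) / ε * ε := by nlinarith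
    _ = a - v := div_mul_cancel₀ _ hε.ne'
  have hlb : a - v ≤ ε → a - v ≤ H * ε := by
    intro h
    have h1 : (a - v) / ε ≤ 1 := (div_le_one hε).2 h
    have h2 : (a - v) / ε ≤ H := le_max_of_le_right (le_min le_rfl h1)
    calc a - v = (a - v) / ε * ε := (div_mul_cancel₀ _ hε.ne').symm
    _ ≤ H * ε := by nlinarith
  rcases lt_trichotomy u v with h | h | h
  · rw [hlt h]
    rcases le_or_gt a u with ha | ha
    · rw [hzero (by linarith)]; nlinarith
    · nlinarith
  · subst h
    rcases le_or_gt a u with ha | ha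
    · rw [hzero (by linarith)]; nlinarith
    · rcases le_or_gt (a - u) ε with hc | hc
      · nlinarith [hlb hc]
      · have : H = 1 := by
          have h1 : (1:ℝ) ≤ (a - u) / ε := (one_le_div hε).2 hc.le
          have : min ((a - u) / ε) 1 = 1 := min_eq_right h1
          simp [hHdef, Heps, this]
        rw [this]; nlinarith
  · rw [hgt h]
    rcases le_or_gt a u with ha | ha
    · nlinarith
    · rcases le_or_gt (a - v) ε with hc | hc
      · nlinarith [hlb hc, hub (by linarith)]
      · have : H = 1 := by
          have h1 : (1:ℝ) ≤ (a - v) / ε := (one_le_div hε).2 hc.le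
          have : min ((a - v) / ε) 1 = 1 := min_eq_right h1
          simp [hHdef, Heps, this]
        rw [this]; nlinarith
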